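/- Fix w ≥ 1 and suppose there exists x₁ ∈ (0, min(x_U, x_V/w)) with U(x₁)·V(w·x₁) = 1. Let P = Σ_{n≥1} p_n X^n and V_w = Σ_{n≥0} b_n w^n X^n be the corresponding formal power series over ℝ, and define the sequence (Z_n(w))_{n≥0} by Σ_{n≥0} Z_n(w) X^n = V_w · (1 − P·V_w)⁻¹ as formal power series (the inverse exists since 1 − P·V_w has constant coefficient 1). Then the radius of convergence of the power series Σ_{n≥0} Z_n(w) x^n, i.e. sup{r ≥ 0 : Σ_{n≥0} Z_n(w)·r^n converges}, equals x₁. -/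

import Mathlib

open Filter Topology Set

private lemma aux_conv_summable {f g : ℕ → ℝ} (hf : Summable f) (hg : Summable g) :
    Summable fun n => ∑ kl ∈ Finset.HasAntidiagonal.antidiagonal n, f kl.1 * g kl.2 :=
  summable_sum_mul_antidiagonal_of_summable_norm' (by simpa using hf.abs) hf
    (by simpa using hg.abs) hg

private lemma aux_conv_eq {f g : ℕ → ℝ} (hf : Summable f) (hg : Summable g) :
    ((∑' n, f n) * ∑' n, g n) = ∑' n, ∑ kl ∈ Finset.HasAntidiagonal.antidiagonal n, f kl.1 * g kl.2 :=
  tsum_mul_tsum_eq_tsum_sum_antidiagonal_of_summable_norm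
    (by simpa using hf.abs) (by simpa using hg.abs)

set_option maxHeartbeats 1000000 in
/-- Fix w ≥ 1 with a solution x₁ ∈ (0, min(x_U, x_V/w)) of the critical
equation U(x₁)·V(w·x₁) = 1.  Then the radius of convergence of the chain generating
function Z(x,w) = V_w·(1 − P·V_w)⁻¹ (as a formal power series) equals x₁. -/
theorem stmt_5
    (p b : ℕ → ℝ)
    (hp : ∀ n, 0 ≤ p n) (hp0 : p 0 = 0)
    (hb : ∀ n, 0 ≤ b n) (hb0 : 0 < b 0)
    (hpN : ∃ N, 1 ≤ N ∧ 0 < p N) (hbM : ∃ M, 1 ≤ M ∧ 0 < b M)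
    (U V : ℝ → ℝ)
    (hU : ∀ x, U x = ∑' n, p n * x ^ n)
    (hV : ∀ x, V x = ∑' n, b n * x ^ n)
    (xU xV : ℝ) (hxU0 : 0 < xU) (hxUV : xU < xV) (hxV1 : xV ≤ 1)
    (hUconv : ∀ x : ℝ, 0 ≤ x → x < xU → Summable fun n => p n * x ^ n)
    (hUdiv : ∀ x : ℝ, xU < x → ¬ Summable fun n => p n * x ^ n)
    (hVconv : ∀ x : ℝ, 0 ≤ x → x < xV → Summable fun n => b n * x ^ n)
    (hVdiv : ∀ x : ℝ, xV < x → ¬ Summable fun n => b n * x ^ n)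
    (hVinf : Filter.Tendsto V (𝓝[<] xV) Filter.atTop)
    (w : ℝ) (hw : 1 ≤ w)
    (x₁ : ℝ) (hx₁ : x₁ ∈ Set.Ioo 0 (min xU (xV / w)))
    (hcrit : U x₁ * V (w * x₁) = 1)
    (Z : PowerSeries ℝ)
    (hZ : Z = PowerSeries.mk (fun n => b n * w ^ n) *
      (1 - PowerSeries.mk p * PowerSeries.mk (fun n => b n * w ^ n))⁻¹) :
    sSup {r : ℝ | 0 ≤ r ∧ Summable fun n => PowerSeries.coeff n Z * r ^ n} = x₁ := by
  obtain ⟨N, hN1, hpN'⟩ := hpN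
  have hx₁0 : 0 < x₁ := hx₁.1
  have hx₁U : x₁ < xU := lt_of_lt_of_le hx₁.2 (min_le_left _ _)
  have hx₁Vw : x₁ < xV / w := lt_of_lt_of_le hx₁.2 (min_le_right _ _)
  have hw0 : 0 < w := lt_of_lt_of_le one_pos hw
  have hwx₁V : w * x₁ < xV := by
    have := (lt_div_iff₀ hw0).mp hx₁Vw; linarith [this]
  set Q : PowerSeries ℝ :=
    PowerSeries.mk p * PowerSeries.mk (fun n => b n * w ^ n) with hQdef
  -- coefficients of Q
  have hQnonneg : ∀ n, 0 ≤ PowerSeries.coeff n Q := by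
    intro n
    rw [hQdef, PowerSeries.coeff_mul]
    exact Finset.sum_nonneg fun kl _ => by
      rw [PowerSeries.coeff_mk, PowerSeries.coeff_mk]
      exact mul_nonneg (hp _) (mul_nonneg (hb _) (pow_nonneg hw0.le _))
  have hQ0 : PowerSeries.coeff 0 Q = 0 := by
    rw [hQdef, PowerSeries.coeff_mul]
    simp [hp0]
  have hconst : PowerSeries.constantCoeff (1 - Q) ≠ 0 := by
    rw [← PowerSeries.coeff_zero_eq_constantCoeff_apply, map_sub, hQ0]
    simp
  -- the renewal recursion for coefficients of Z
  have h1 : Z * (1 - Q) = PowerSeries.mk (fun n => b n * w ^ n) := by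
    rw [hZ, mul_assoc, PowerSeries.inv_mul_cancel _ hconst, mul_one]
  have h2 : Z = PowerSeries.mk (fun n => b n * w ^ n) + Q * Z := by
    rw [← h1]; ring
  have hrec : ∀ n, PowerSeries.coeff n Z =
      b n * w ^ n + ∑ kl ∈ Finset.HasAntidiagonal.antidiagonal n,
        PowerSeries.coeff kl.1 Q * PowerSeries.coeff kl.2 Z := by
    intro n
    conv_lhs => rw [h2]
    rw [map_add, PowerSeries.coeff_mk, PowerSeries.coeff_mul]
  -- nonnegativity of coefficients of Z
  have hZnn : ∀ n, 0 ≤ PowerSeries.coeff n Z := by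
    intro n
    induction n using Nat.strong_induction_on with
    | _ n ih =>
      rw [hrec n]
      have hsum : 0 ≤ ∑ kl ∈ Finset.HasAntidiagonal.antidiagonal n,
          PowerSeries.coeff kl.1 Q * PowerSeries.coeff kl.2 Z := by
        refine Finset.sum_nonneg fun kl hkl => ?_
        rcases Nat.eq_zero_or_pos kl.1 with h0 | h1
        · rw [h0, hQ0, zero_mul]
        · have hkl2 : kl.2 < n := by
            have := Finset.HasAntidiagonal.mem_antidiagonal.mp hkl; omega
          exact mul_nonneg (hQnonneg _) (ih _ hkl2)
      have : 0 ≤ b n * w ^ n := mul_nonneg (hb n) (pow_nonneg hw0.le n)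
      linarith
  -- rewriting the recursion at a point r
  have hz_eq : ∀ (r : ℝ) (n : ℕ), PowerSeries.coeff n Z * r ^ n =
      b n * (w * r) ^ n + ∑ kl ∈ Finset.HasAntidiagonal.antidiagonal n,
        (PowerSeries.coeff kl.1 Q * r ^ kl.1) * (PowerSeries.coeff kl.2 Z * r ^ kl.2) := by
    intro r n
    rw [hrec n, add_mul, Finset.sum_mul, mul_pow]
    congr 1
    · ring
    · refine Finset.sum_congr rfl fun kl hkl => ?_
      have h := Finset.HasAntidiagonal.mem_antidiagonal.mp hkl
      rw [← h, pow_add]; ring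
  -- the generating function of Q evaluated at r
  have key : ∀ r : ℝ, 0 ≤ r → r < xU → w * r < xV →
      Summable (fun n => PowerSeries.coeff n Q * r ^ n) ∧
      (∑' n, PowerSeries.coeff n Q * r ^ n) = U r * V (w * r) := by
    intro r hr0 hrU hrV
    have hpr : Summable fun n => p n * r ^ n := hUconv r hr0 hrU
    have hbr : Summable fun n => b n * (w * r) ^ n := hVconv (w * r) (mul_nonneg hw0.le hr0) hrV
    have heq : ∀ n, PowerSeries.coeff n Q * r ^ n =
        ∑ kl ∈ Finset.HasAntidiagonal.antidiagonal n,
          (p kl.1 * r ^ kl.1) * (b kl.2 * (w * r) ^ kl.2) := by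
      intro n
      rw [hQdef, PowerSeries.coeff_mul, Finset.sum_mul]
      refine Finset.sum_congr rfl fun kl hkl => ?_
      have h := Finset.HasAntidiagonal.mem_antidiagonal.mp hkl
      rw [PowerSeries.coeff_mk, PowerSeries.coeff_mk, ← h, pow_add, mul_pow]
      ring
    constructor
    · exact (aux_conv_summable hpr hbr).congr fun n => (heq n).symm
    · calc (∑' n, PowerSeries.coeff n Q * r ^ n)
          = ∑' n, ∑ kl ∈ Finset.HasAntidiagonal.antidiagonal n,
              (p kl.1 * r ^ kl.1) * (b kl.2 * (w * r) ^ kl.2) := tsum_congr heq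
        _ = (∑' n, p n * r ^ n) * (∑' n, b n * (w * r) ^ n) := (aux_conv_eq hpr hbr).symm
        _ = U r * V (w * r) := by rw [hU, hV]
  -- positivity and monotonicity of U and V
  have hVpos : ∀ s : ℝ, 0 ≤ s → s < xV → 0 < V s := by
    intro s hs0 hsV
    rw [hV]
    exact Summable.tsum_pos (hVconv s hs0 hsV)
      (fun n => mul_nonneg (hb n) (pow_nonneg hs0 n)) 0 (by simpa using hb0)
  have hVmono : ∀ s t : ℝ, 0 ≤ s → s ≤ t → t < xV → V s ≤ V t := by
    intro s t hs0 hst htV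
    rw [hV, hV]
    exact Summable.tsum_le_tsum
      (fun n => mul_le_mul_of_nonneg_left (pow_le_pow_left₀ hs0 hst n) (hb n))
      (hVconv s hs0 (lt_of_le_of_lt hst htV)) (hVconv t (hs0.trans hst) htV)
  have hUmono : ∀ s t : ℝ, 0 ≤ s → s < t → t < xU → U s < U t := by
    intro s t hs0 hst htU
    rw [hU, hU]
    refine Summable.tsum_lt_tsum_of_nonneg
      (fun n => mul_nonneg (hp n) (pow_nonneg hs0 n))
      (fun n => mul_le_mul_of_nonneg_left (pow_le_pow_left₀ hs0 hst.le n) (hp n))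
      (i := N) ?_ (hUconv t (hs0.trans hst.le) htU)
    exact mul_lt_mul_of_pos_left (pow_lt_pow_left₀ hst hs0 (by omega)) hpN'
  have hUnn : ∀ s : ℝ, 0 ≤ s → 0 ≤ U s := by
    intro s hs0
    rw [hU]
    exact tsum_nonneg fun n => mul_nonneg (hp n) (pow_nonneg hs0 n)
  -- θ(r) < 1 below x₁
  have hθlt : ∀ r : ℝ, 0 ≤ r → r < x₁ → U r * V (w * r) < 1 := by
    intro r hr0 hrx₁
    have hUr : U r < U x₁ := hUmono r x₁ hr0 hrx₁ hx₁U
    have hVle : V (w * r) ≤ V (w * x₁) :=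
      hVmono (w * r) (w * x₁) (mul_nonneg hw0.le hr0) (by nlinarith) hwx₁V
    have hVp : 0 < V (w * x₁) := hVpos _ (mul_nonneg hw0.le hx₁0.le) hwx₁V
    calc U r * V (w * r) ≤ U r * V (w * x₁) :=
          mul_le_mul_of_nonneg_left hVle (hUnn r hr0)
      _ < U x₁ * V (w * x₁) := by nlinarith
      _ = 1 := hcrit
  -- θ(r) > 1 above x₁
  have hθgt : ∀ r : ℝ, x₁ < r → r < xU → w * r < xV → 1 < U r * V (w * r) := by
    intro r hx₁r hrU hrV
    have hUr : U x₁ < U r := hUmono x₁ r hx₁0.le hx₁r hrU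
    have hVle : V (w * x₁) ≤ V (w * r) :=
      hVmono (w * x₁) (w * r) (mul_nonneg hw0.le hx₁0.le) (by nlinarith) hrV
    have hVp : 0 < V (w * r) := hVpos _ (mul_nonneg hw0.le (by nlinarith : (0:ℝ) ≤ r)) hrV
    have hUx₁ : 0 ≤ U x₁ := hUnn x₁ hx₁0.le
    calc (1 : ℝ) = U x₁ * V (w * x₁) := hcrit.symm
      _ ≤ U x₁ * V (w * r) := mul_le_mul_of_nonneg_left hVle hUx₁
      _ < U r * V (w * r) := by nlinarith
  -- summability below x₁
  have hsum : ∀ r : ℝ, 0 ≤ r → r < x₁ →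
      Summable (fun n => PowerSeries.coeff n Z * r ^ n) := by
    intro r hr0 hrx₁
    have hrU : r < xU := hrx₁.trans hx₁U
    have hrV : w * r < xV := by nlinarith
    obtain ⟨ha, hθeq⟩ := key r hr0 hrU hrV
    set θ := U r * V (w * r) with hθ
    have hθ1 : θ < 1 := hθlt r hr0 hrx₁
    have hθnn : 0 ≤ θ := by
      rw [← hθeq]
      exact tsum_nonneg fun n => mul_nonneg (hQnonneg n) (pow_nonneg hr0 n)
    have hc : Summable (fun n => b n * (w * r) ^ n) := hVconv (w * r) (mul_nonneg hw0.le hr0) hrV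
    have hznn : ∀ n, 0 ≤ PowerSeries.coeff n Z * r ^ n :=
      fun n => mul_nonneg (hZnn n) (pow_nonneg hr0 n)
    refine summable_of_sum_range_le (c := V (w * r) / (1 - θ)) hznn ?_
    intro M
    set S := ∑ n ∈ Finset.range M, PowerSeries.coeff n Z * r ^ n with hS
    have hSnn : 0 ≤ S := Finset.sum_nonneg fun n _ => hznn n
    -- the convolution partial-sum bound
    have hdisj : (↑(Finset.range M) : Set ℕ).PairwiseDisjoint Finset.HasAntidiagonal.antidiagonal := by
      intro m _ n _ hmn
      simp only [Finset.disjoint_left]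
      intro kl h1 h2
      exact hmn (by
        have := Finset.HasAntidiagonal.mem_antidiagonal.mp h1
        have := Finset.HasAntidiagonal.mem_antidiagonal.mp h2
        omega)
    have hbound : ∑ n ∈ Finset.range M, ∑ kl ∈ Finset.HasAntidiagonal.antidiagonal n,
        (PowerSeries.coeff kl.1 Q * r ^ kl.1) * (PowerSeries.coeff kl.2 Z * r ^ kl.2)
        ≤ θ * S := by
      rw [← Finset.sum_biUnion hdisj]
      have hsubset : (Finset.range M).biUnion Finset.HasAntidiagonal.antidiagonal ⊆
          Finset.range M ×ˢ Finset.range M := by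
        intro kl hkl
        simp only [Finset.mem_biUnion, Finset.mem_range] at hkl
        obtain ⟨n, hn, hmem⟩ := hkl
        have := Finset.HasAntidiagonal.mem_antidiagonal.mp hmem
        simp only [Finset.mem_product, Finset.mem_range]
        omega
      have step1 : ∑ kl ∈ (Finset.range M).biUnion Finset.HasAntidiagonal.antidiagonal,
          (PowerSeries.coeff kl.1 Q * r ^ kl.1) * (PowerSeries.coeff kl.2 Z * r ^ kl.2)
          ≤ ∑ kl ∈ Finset.range M ×ˢ Finset.range M,
          (PowerSeries.coeff kl.1 Q * r ^ kl.1) * (PowerSeries.coeff kl.2 Z * r ^ kl.2) :=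
        Finset.sum_le_sum_of_subset_of_nonneg hsubset fun kl _ _ =>
          mul_nonneg (mul_nonneg (hQnonneg _) (pow_nonneg hr0 _)) (hznn _)
      have step2 : ∑ kl ∈ Finset.range M ×ˢ Finset.range M,
          (PowerSeries.coeff kl.1 Q * r ^ kl.1) * (PowerSeries.coeff kl.2 Z * r ^ kl.2)
          = (∑ i ∈ Finset.range M, PowerSeries.coeff i Q * r ^ i) * S := by
        rw [hS, Finset.sum_mul_sum, Finset.sum_product]
      have step3 : (∑ i ∈ Finset.range M, PowerSeries.coeff i Q * r ^ i) ≤ θ := by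
        rw [← hθeq]
        exact Summable.sum_le_tsum _ (fun i _ => mul_nonneg (hQnonneg i) (pow_nonneg hr0 i)) ha
      calc _ ≤ _ := step1
        _ = _ := step2
        _ ≤ θ * S := mul_le_mul_of_nonneg_right step3 hSnn
    have hCle : ∑ n ∈ Finset.range M, b n * (w * r) ^ n ≤ V (w * r) := by
      rw [hV]
      exact Summable.sum_le_tsum _ (fun n _ => mul_nonneg (hb n) (pow_nonneg (mul_nonneg hw0.le hr0) n)) hc
    have hstep : S ≤ V (w * r) + θ * S := by
      have : S = (∑ n ∈ Finset.range M, b n * (w * r) ^ n) +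
          ∑ n ∈ Finset.range M, ∑ kl ∈ Finset.HasAntidiagonal.antidiagonal n,
            (PowerSeries.coeff kl.1 Q * r ^ kl.1) * (PowerSeries.coeff kl.2 Z * r ^ kl.2) := by
        rw [hS, ← Finset.sum_add_distrib]
        exact Finset.sum_congr rfl fun n _ => hz_eq r n
      calc S = _ := this
        _ ≤ V (w * r) + θ * S := add_le_add hCle hbound
    rw [le_div_iff₀ (by linarith)]
    nlinarith
  -- divergence above x₁ (within the disc of convergence of U, V)
  have hdiv : ∀ r : ℝ, x₁ < r → r < xU → w * r < xV →
      ¬ Summable (fun n => PowerSeries.coeff n Z * r ^ n) := by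
    intro r hx₁r hrU hrV hS
    have hr0 : 0 ≤ r := (hx₁0.trans hx₁r).le
    obtain ⟨ha, hθeq⟩ := key r hr0 hrU hrV
    have hc : Summable (fun n => b n * (w * r) ^ n) := hVconv (w * r) (mul_nonneg hw0.le hr0) hrV
    have hconv : Summable (fun n => ∑ kl ∈ Finset.HasAntidiagonal.antidiagonal n,
        (PowerSeries.coeff kl.1 Q * r ^ kl.1) * (PowerSeries.coeff kl.2 Z * r ^ kl.2)) :=
      aux_conv_summable (f := fun n => PowerSeries.coeff n Q * r ^ n)
        (g := fun n => PowerSeries.coeff n Z * r ^ n) ha hS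
    have htsum : (∑' n, PowerSeries.coeff n Z * r ^ n) =
        V (w * r) + (U r * V (w * r)) * ∑' n, PowerSeries.coeff n Z * r ^ n := by
      calc (∑' n, PowerSeries.coeff n Z * r ^ n)
          = ∑' n, (b n * (w * r) ^ n + ∑ kl ∈ Finset.HasAntidiagonal.antidiagonal n,
              (PowerSeries.coeff kl.1 Q * r ^ kl.1) * (PowerSeries.coeff kl.2 Z * r ^ kl.2)) :=
            tsum_congr (hz_eq r)
        _ = (∑' n, b n * (w * r) ^ n) + ∑' n, ∑ kl ∈ Finset.HasAntidiagonal.antidiagonal n,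
              (PowerSeries.coeff kl.1 Q * r ^ kl.1) * (PowerSeries.coeff kl.2 Z * r ^ kl.2) :=
            Summable.tsum_add hc hconv
        _ = V (w * r) + (U r * V (w * r)) * ∑' n, PowerSeries.coeff n Z * r ^ n := by
            rw [← aux_conv_eq ha hS, hθeq, ← hV (w * r)]
    have hSnn : 0 ≤ ∑' n, PowerSeries.coeff n Z * r ^ n :=
      tsum_nonneg fun n => mul_nonneg (hZnn n) (pow_nonneg hr0 n)
    have hCpos : 0 < V (w * r) := hVpos _ (mul_nonneg hw0.le (by nlinarith : (0:ℝ) ≤ r)) hrV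
    have hθ1 : 1 < U r * V (w * r) := hθgt r hx₁r hrU hrV
    nlinarith [htsum, hSnn, hCpos, hθ1]
  -- assembling: the set is [0, x₁) (possibly with x₁), with sup x₁
  have h0mem : (0 : ℝ) ∈ {r : ℝ | 0 ≤ r ∧ Summable fun n => PowerSeries.coeff n Z * r ^ n} := by
    refine ⟨le_refl 0, ?_⟩
    apply summable_of_finite_support
    apply Set.Finite.subset (Set.finite_singleton 0)
    intro n hn
    simp only [Function.mem_support] at hn
    by_contra h
    exact hn (by rw [zero_pow h, mul_zero])
  have hbdd : ∀ r ∈ {r : ℝ | 0 ≤ r ∧ Summable fun n => PowerSeries.coeff n Z * r ^ n},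
      r ≤ x₁ := by
    rintro r ⟨hr0, hrs⟩
    by_contra h
    push_neg at h
    set m := min xU (xV / w) with hm
    have hx₁m : x₁ < m := hx₁.2
    set r' := min r ((x₁ + m) / 2) with hr'
    have h1 : x₁ < r' := lt_min h (by linarith)
    have h2 : r' < m := lt_of_le_of_lt (min_le_right _ _) (by linarith)
    have hr'U : r' < xU := lt_of_lt_of_le h2 (min_le_left _ _)
    have hr'V : w * r' < xV := by
      have : r' < xV / w := lt_of_lt_of_le h2 (min_le_right _ _)
      have := (lt_div_iff₀ hw0).mp this; linarith
    have hr'0 : 0 ≤ r' := (hx₁0.trans h1).le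
    have hsum' : Summable (fun n => PowerSeries.coeff n Z * r' ^ n) := by
      refine hrs.of_nonneg_of_le
        (fun n => mul_nonneg (hZnn n) (pow_nonneg hr'0 n)) (fun n => ?_)
      exact mul_le_mul_of_nonneg_left (pow_le_pow_left₀ hr'0 (min_le_left _ _) n) (hZnn n)
    exact hdiv r' h1 hr'U hr'V hsum'
  have hbddAbove : BddAbove {r : ℝ | 0 ≤ r ∧ Summable fun n => PowerSeries.coeff n Z * r ^ n} :=
    ⟨x₁, fun r hr => hbdd r hr⟩
  refine le_antisymm (csSup_le ⟨0, h0mem⟩ hbdd) ?_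
  by_contra h
  push_neg at h
  have h0le : 0 ≤ sSup {r : ℝ | 0 ≤ r ∧ Summable fun n => PowerSeries.coeff n Z * r ^ n} :=
    le_csSup hbddAbove h0mem
  set y := (sSup {r : ℝ | 0 ≤ r ∧ Summable fun n => PowerSeries.coeff n Z * r ^ n} + x₁) / 2
    with hy
  have hy0 : 0 ≤ y := by rw [hy]; linarith
  have hy1 : y < x₁ := by rw [hy]; linarith
  have hymem : y ∈ {r : ℝ | 0 ≤ r ∧ Summable fun n => PowerSeries.coeff n Z * r ^ n} :=
    ⟨hy0, hsum y hy0 hy1⟩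
  have := le_csSup hbddAbove hymem
  rw [hy] at this
  linarith
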